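/- arXiv:2003.09505 — 2 statements merged into one kernel-verified Lean document; each statement's English description precedes it below -/
import Mathlib

section
/- Let n ≥ 1, let p : {1,…,n} → [0,1] be a probability profile, let σ be a sorting permutation for p, let D ∈ ℝ, and let 1 ≤ k ≤ n satisfy ∑_{i=1}^{k−1} p_{σ(i)} = D − 1/2. Then f_{p,D}({σ(1),…,σ(k−1)}) = f_{p,D}({σ(1),…,σ(k)}), and both subsets {σ(1),…,σ(k−1)} and {σ(1),…,σ(k)} are optimal. -/
open Finset

/-- Expected loss `f_{p,D}(S) = (∑_{i∈S} p_i − D)² + ∑_{i∈S} p_i(1 − p_i)`. -/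
noncomputable def expLoss {n : ℕ} (p : Fin n → ℝ) (D : ℝ) (S : Finset (Fin n)) : ℝ :=
  (∑ i ∈ S, p i - D) ^ 2 + ∑ i ∈ S, p i * (1 - p i)

/-- The set `{σ(1),…,σ(k)}` (1-based), i.e. the image under `σ` of the first `k` indices. -/
def prefixSet {n : ℕ} (σ : Equiv.Perm (Fin n)) (k : ℕ) : Finset (Fin n) :=
  (Finset.univ.filter fun i : Fin n => (i : ℕ) < k).image σ

lemma mem_prefixSet {n : ℕ} (σ : Equiv.Perm (Fin n)) (m : ℕ) (i : Fin n) :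
    i ∈ prefixSet σ m ↔ ((σ.symm i : ℕ) < m) := by
  simp only [prefixSet, Finset.mem_image, Finset.mem_filter, Finset.mem_univ, true_and]
  constructor
  · rintro ⟨j, hj, rfl⟩; simpa using hj
  · intro h; exact ⟨σ.symm i, h, σ.apply_symm_apply i⟩

/-- Key exchange inequality. -/
lemma key_ineq {n : ℕ} (p : Fin n → ℝ) (X : Finset (Fin n)) :
    ∀ (Y : Finset (Fin n)) (c : ℝ),
    (∀ i ∈ X, 0 ≤ p i ∧ p i ≤ c) → (∀ j ∈ Y, c ≤ p j) →
    ∑ i ∈ X, (p i)^2 - ∑ j ∈ Y, (p j)^2 ≤ (∑ i ∈ X, p i - ∑ j ∈ Y, p j)^2 := by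
  induction X using Finset.strongInduction with
  | _ X ih =>
    intro Y c hX hY
    by_cases hYe : Y.Nonempty
    · obtain ⟨y, hy⟩ := hYe
      set d : ℝ := ∑ i ∈ X, p i - ∑ j ∈ Y, p j with hd
      by_cases hex : ∃ x ∈ X, d ≤ p x
      · obtain ⟨x, hx, hdx⟩ := hex
        have hIH := ih (X.erase x) (Finset.erase_ssubset hx) (Y.erase y) c
          (fun i hi => hX i (Finset.mem_of_mem_erase hi))
          (fun j hj => hY j (Finset.mem_of_mem_erase hj))
        have hXs : ∑ i ∈ X, p i = p x + ∑ i ∈ X.erase x, p i :=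
          (Finset.add_sum_erase X p hx).symm
        have hXs2 : ∑ i ∈ X, (p i)^2 = (p x)^2 + ∑ i ∈ X.erase x, (p i)^2 :=
          (Finset.add_sum_erase X (fun i => (p i)^2) hx).symm
        have hYs : ∑ j ∈ Y, p j = p y + ∑ j ∈ Y.erase y, p j :=
          (Finset.add_sum_erase Y p hy).symm
        have hYs2 : ∑ j ∈ Y, (p j)^2 = (p y)^2 + ∑ j ∈ Y.erase y, (p j)^2 :=
          (Finset.add_sum_erase Y (fun j => (p j)^2) hy).symm
        have hxy : p x ≤ p y := le_trans (hX x hx).2 (hY y hy)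
        rw [hd] at hdx
        have hprod : 0 ≤ (p y - p x) * (p x - (∑ i ∈ X, p i - ∑ j ∈ Y, p j)) :=
          mul_nonneg (by linarith) (by linarith)
        rw [hd, hXs, hXs2, hYs, hYs2]
        rw [hXs, hYs] at hprod
        nlinarith [hIH, hprod]
      · -- every element of X is < d
        push_neg at hex
        by_cases hXe : X.Nonempty
        · obtain ⟨x₀, hx₀⟩ := hXe
          have hc0 : 0 ≤ c := le_trans (hX x₀ hx₀).1 (hX x₀ hx₀).2
          have hd0 : 0 < d := lt_of_le_of_lt (hX x₀ hx₀).1 (hex x₀ hx₀)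
          set e : ℝ := min c d with he
          have he0 : 0 ≤ e := le_min hc0 hd0.le
          have hed : e ≤ d := min_le_right c d
          have h1 : ∑ i ∈ X, (p i)^2 ≤ e * ∑ i ∈ X, p i := by
            rw [Finset.mul_sum]
            apply Finset.sum_le_sum
            intro i hi
            have h1 := hX i hi
            have h2 := hex i hi
            have hpe : p i ≤ e := le_min h1.2 h2.le
            nlinarith [h1.1]
          have h2 : e * ∑ j ∈ Y, p j ≤ ∑ j ∈ Y, (p j)^2 := by
            rw [Finset.mul_sum]
            apply Finset.sum_le_sum
            intro j hj
            have h3 := hY j hj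
            have hpj : 0 ≤ p j := le_trans hc0 h3
            have hep : e ≤ p j := le_trans (min_le_left c d) h3
            nlinarith
          nlinarith [h1, h2, hd0, hed, he0]
        · rw [Finset.not_nonempty_iff_eq_empty] at hXe
          subst hXe
          have hQ : (0:ℝ) ≤ ∑ j ∈ Y, (p j)^2 :=
            Finset.sum_nonneg fun j _ => sq_nonneg _
          simp only [Finset.sum_empty]
          nlinarith [sq_nonneg (∑ j ∈ Y, p j)]
    · rw [Finset.not_nonempty_iff_eq_empty] at hYe
      subst hYe
      simp only [Finset.sum_empty, sub_zero]
      have hnn : ∀ i ∈ X, 0 ≤ p i := fun i hi => (hX i hi).1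
      calc ∑ i ∈ X, (p i)^2 ≤ ∑ i ∈ X, p i * ∑ j ∈ X, p j := by
            apply Finset.sum_le_sum
            intro i hi
            have := Finset.single_le_sum hnn hi
            nlinarith [(hX i hi).1]
        _ = (∑ i ∈ X, p i)^2 := by rw [← Finset.sum_mul]; ring

theorem stmt_5 {n : ℕ} (hn : 1 ≤ n) (p : Fin n → ℝ)
    (hp : ∀ i, 0 ≤ p i ∧ p i ≤ 1) (D : ℝ)
    (σ : Equiv.Perm (Fin n)) (hσ : ∀ i j : Fin n, i ≤ j → p (σ j) ≤ p (σ i))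
    (k : ℕ) (hk1 : 1 ≤ k) (hk2 : k ≤ n)
    (heq : ∑ i ∈ prefixSet σ (k - 1), p i = D - 1/2) :
    expLoss p D (prefixSet σ (k - 1)) = expLoss p D (prefixSet σ k) ∧
    (∀ S : Finset (Fin n), expLoss p D (prefixSet σ (k - 1)) ≤ expLoss p D S) ∧
    (∀ S : Finset (Fin n), expLoss p D (prefixSet σ k) ≤ expLoss p D S) := by
  set A := prefixSet σ (k - 1) with hA
  have hkn : k - 1 < n := by omega
  set K : Fin n := ⟨k - 1, hkn⟩ with hK
  have hKA : σ K ∉ A := by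
    rw [hA, mem_prefixSet]
    simp [hK]
  have hB : prefixSet σ k = insert (σ K) A := by
    ext i
    rw [mem_prefixSet, Finset.mem_insert, hA, mem_prefixSet]
    constructor
    · intro h
      by_cases h2 : (σ.symm i : ℕ) < k - 1
      · exact Or.inr h2
      · left
        have : σ.symm i = K := by
          apply Fin.ext; simp [hK]; omega
        rw [← this, σ.apply_symm_apply]
    · rintro (rfl | h2)
      · simp [hK]; omega
      · omega
  -- equality part
  have hEq : expLoss p D A = expLoss p D (prefixSet σ k) := by
    rw [hB, expLoss, expLoss, Finset.sum_insert hKA, Finset.sum_insert hKA, heq]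
    ring
  -- optimality of A
  have hOptA : ∀ S : Finset (Fin n), expLoss p D A ≤ expLoss p D S := by
    intro S
    set c : ℝ := p (σ K) with hc
    have hXh : ∀ i ∈ S \ A, 0 ≤ p i ∧ p i ≤ c := by
      intro i hi
      refine ⟨(hp i).1, ?_⟩
      have hiA : i ∉ A := (Finset.mem_sdiff.mp hi).2
      rw [hA, mem_prefixSet] at hiA
      push_neg at hiA
      have hle : K ≤ σ.symm i := by
        rw [Fin.le_def]; simpa [hK] using hiA
      have := hσ K (σ.symm i) hle
      rwa [σ.apply_symm_apply] at this
    have hYh : ∀ j ∈ A \ S, c ≤ p j := by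
      intro j hj
      have hjA : j ∈ A := (Finset.mem_sdiff.mp hj).1
      rw [hA, mem_prefixSet] at hjA
      have hle : σ.symm j ≤ K := by
        rw [Fin.le_def]; simp [hK]; omega
      have := hσ (σ.symm j) K hle
      rwa [σ.apply_symm_apply] at this
    have hkey := key_ineq p (S \ A) (A \ S) c hXh hYh
    have h1 : ∑ i ∈ S \ A, p i - ∑ i ∈ A \ S, p i = ∑ i ∈ S, p i - ∑ i ∈ A, p i :=
      Finset.sum_sdiff_sub_sum_sdiff
    have h2 : ∑ i ∈ S \ A, (p i)^2 - ∑ i ∈ A \ S, (p i)^2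
        = ∑ i ∈ S, (p i)^2 - ∑ i ∈ A, (p i)^2 :=
      Finset.sum_sdiff_sub_sum_sdiff
    rw [h1, h2, heq] at hkey
    have hS : ∑ i ∈ S, p i * (1 - p i) = ∑ i ∈ S, p i - ∑ i ∈ S, (p i)^2 := by
      rw [← Finset.sum_sub_distrib]
      apply Finset.sum_congr rfl
      intro i _; ring
    have hAm : ∑ i ∈ A, p i * (1 - p i) = ∑ i ∈ A, p i - ∑ i ∈ A, (p i)^2 := by
      rw [← Finset.sum_sub_distrib]
      apply Finset.sum_congr rfl
      intro i _; ring
    rw [expLoss, expLoss, hS, hAm, heq]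
    nlinarith [hkey]
  exact ⟨hEq, hOptA, fun S => hEq ▸ hOptA S⟩
end

section
/- Let n ≥ 1, let p : {1,…,n} → [0,1] be a probability profile with a sorting permutation σ, and let D > 0. Assume (A1) p_{σ(1)} > p_{σ(2)} > … > p_{σ(n)} > 0, and (A2) there exists k with 1 ≤ k ≤ n such that ∑_{i=1}^{k} p_{σ(i)} > D − 1/2 and ∑_{i=1}^{k−1} p_{σ(i)} < D − 1/2. Define δ₁ = ∑_{i=1}^{k} p_{σ(i)} − (D − 1/2), δ₂ = (D − 1/2) − ∑_{i=1}^{k−1} p_{σ(i)}, Δ_k = p_{σ(k)} − p_{σ(k+1)} if k < n and Δ_n = 2, and ε₀ = min(δ₁/k, δ₂/k, Δ_k/2). Then ε₀ > 0, and for every probability profile p̃ : {1,…,n} → [0,1] with |p̃_i − p_i| < ε₀ for all i: (i) p̃_{σ(i)} > p̃_{σ(j)} whenever 1 ≤ i ≤ k < j ≤ n; (ii) ∑_{i=1}^{k} p̃_{σ(i)} > D − 1/2 and ∑_{i=1}^{k−1} p̃_{σ(i)} < D − 1/2; consequently the set {σ(1),…,σ(k)} consists of the k largest entries of p̃, it is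 the output of the offline optimization algorithm applied to (p̃, D), and it is optimal for the true profile p. -/
open Finset

lemma mem_prefixSet_aux {n : ℕ} (σ : Equiv.Perm (Fin n)) (m : ℕ) (x : Fin n) :
    x ∈ prefixSet σ m ↔ (σ.symm x : ℕ) < m := by
  simp only [prefixSet, Finset.mem_image, mem_filter, mem_univ, true_and]
  constructor
  · rintro ⟨i, hi, rfl⟩; simpa using hi
  · intro h; exact ⟨σ.symm x, h, σ.apply_symm_apply x⟩

lemma card_prefixSet_aux {n : ℕ} (σ : Equiv.Perm (Fin n)) {m : ℕ} (h : m ≤ n) :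
    (prefixSet σ m).card = m := by
  rw [prefixSet, Finset.card_image_of_injective _ σ.injective]
  have : (Finset.univ.filter fun i : Fin n => (i : ℕ) < m) = Finset.map (Fin.castLEEmb h) Finset.univ := by
    ext x
    simp only [mem_filter, mem_univ, true_and, Finset.mem_map, Fin.castLEEmb, Function.Embedding.coeFn_mk]
    constructor
    · intro hx; exact ⟨⟨x, hx⟩, Fin.ext rfl⟩
    · rintro ⟨y, rfl⟩; simpa using y.isLt
  rw [this, Finset.card_map, Finset.card_univ, Fintype.card_fin]

lemma prefixSet_mono_aux {n : ℕ} (σ : Equiv.Perm (Fin n)) {m m' : ℕ} (h : m ≤ m') :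
    prefixSet σ m ⊆ prefixSet σ m' := by
  intro x hx; rw [mem_prefixSet_aux] at *; omega

lemma prefixSet_univ_aux {n : ℕ} (σ : Equiv.Perm (Fin n)) : prefixSet σ n = Finset.univ := by
  ext x; simp [mem_prefixSet_aux, (σ.symm x).isLt]

lemma not_mem_prefixSet_succ_aux {n : ℕ} (σ : Equiv.Perm (Fin n)) {k : ℕ} (hk1 : 1 ≤ k) (hk2 : k ≤ n) :
    σ ⟨k - 1, by omega⟩ ∉ prefixSet σ (k - 1) := by
  rw [mem_prefixSet_aux, Equiv.symm_apply_apply]; simp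

lemma prefixSet_succ_aux {n : ℕ} (σ : Equiv.Perm (Fin n)) {k : ℕ} (hk1 : 1 ≤ k) (hk2 : k ≤ n) :
    prefixSet σ k = insert (σ ⟨k - 1, by omega⟩) (prefixSet σ (k - 1)) := by
  ext x
  simp only [mem_prefixSet_aux, Finset.mem_insert]
  constructor
  · intro hx
    rcases Nat.lt_or_ge (σ.symm x : ℕ) (k-1) with h | h
    · exact Or.inr h
    · left
      have : σ.symm x = ⟨k - 1, by omega⟩ := Fin.ext (by simp; omega)
      rw [← this, σ.apply_symm_apply]
  · rintro (rfl | hx)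
    · rw [Equiv.symm_apply_apply]; simp; omega
    · omega

lemma sum_prefixSet_succ_aux {n : ℕ} (σ : Equiv.Perm (Fin n)) {k : ℕ} (hk1 : 1 ≤ k) (hk2 : k ≤ n)
    (f : Fin n → ℝ) :
    ∑ i ∈ prefixSet σ k, f i = f (σ ⟨k - 1, by omega⟩) + ∑ i ∈ prefixSet σ (k - 1), f i := by
  rw [prefixSet_succ_aux σ hk1 hk2, Finset.sum_insert (not_mem_prefixSet_succ_aux σ hk1 hk2)]

lemma core_ineq {n : ℕ} (p : Fin n → ℝ) (a t : ℝ) (ht0 : 0 ≤ t) (ht2 : t ≤ 2 * a) :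
    ∀ N : ℕ, ∀ A B : Finset (Fin n), A.card + B.card ≤ N →
    (∀ x ∈ A, 0 ≤ p x) → (∀ x ∈ A, p x ≤ a) → (∀ y ∈ B, a ≤ p y) →
    0 ≤ (∑ i ∈ A, p i - ∑ j ∈ B, p j) ^ 2 + t * (∑ i ∈ A, p i - ∑ j ∈ B, p j)
        + (∑ j ∈ B, (p j) ^ 2 - ∑ i ∈ A, (p i) ^ 2) := by
  have ha0 : 0 ≤ a := by linarith
  intro N
  induction N with
  | zero =>
    intro A B hcard _ _ _
    have hA : A = ∅ := Finset.card_eq_zero.mp (by omega)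
    have hB : B = ∅ := Finset.card_eq_zero.mp (by omega)
    subst hA; subst hB; simp
  | succ N ih =>
    intro A B hcard hA0 hAa hBa
    classical
    by_cases hx : ∃ x ∈ A, p x ≤ (∑ i ∈ A, p i - ∑ j ∈ B, p j) + t / 2
    · obtain ⟨x, hxA, hxle⟩ := hx
      have hsplit : ∑ i ∈ A, p i = p x + ∑ i ∈ A.erase x, p i := by
        rw [Finset.add_sum_erase _ _ hxA]
      have hsplit2 : ∑ i ∈ A, (p i) ^ 2 = (p x) ^ 2 + ∑ i ∈ A.erase x, (p i) ^ 2 :=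
        (Finset.add_sum_erase A (fun i => (p i) ^ 2) hxA).symm
      have hcard' : (A.erase x).card + B.card ≤ N := by
        have := Finset.card_erase_of_mem hxA
        have := Finset.card_pos.mpr ⟨x, hxA⟩
        omega
      have hrec := ih (A.erase x) B hcard' (fun y hy => hA0 y (Finset.mem_of_mem_erase hy))
        (fun y hy => hAa y (Finset.mem_of_mem_erase hy)) hBa
      have hfac : 0 ≤ p x * ((∑ i ∈ A.erase x, p i - ∑ j ∈ B, p j) + t / 2) := by
        apply mul_nonneg (hA0 x hxA)
        rw [hsplit] at hxle; linarith
      rw [hsplit, hsplit2]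
      nlinarith [hrec, hfac]
    · push_neg at hx
      rcases Finset.eq_empty_or_nonempty B with rfl | ⟨y, hyB⟩
      · rcases Finset.eq_empty_or_nonempty A with rfl | ⟨x, hxA⟩
        · simp
        · exfalso
          have h1 : p x ≤ ∑ i ∈ A, p i := Finset.single_le_sum hA0 hxA
          have h2 := hx x hxA
          simp only [Finset.sum_empty, sub_zero] at h2
          linarith
      · have hBy0 : ∀ z ∈ B, 0 ≤ p z := fun z hz => le_trans ha0 (hBa z hz)
        have hysum : p y ≤ ∑ j ∈ B, p j := Finset.single_le_sum hBy0 hyB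
        have hsplitB : ∑ j ∈ B, p j = p y + ∑ j ∈ B.erase y, p j := by
          rw [Finset.add_sum_erase _ _ hyB]
        have hsplitB2 : ∑ j ∈ B, (p j) ^ 2 = (p y) ^ 2 + ∑ j ∈ B.erase y, (p j) ^ 2 :=
          (Finset.add_sum_erase B (fun j => (p j) ^ 2) hyB).symm
        rcases Finset.eq_empty_or_nonempty A with rfl | ⟨x, hxA⟩
        · have hcard' : (∅ : Finset (Fin n)).card + (B.erase y).card ≤ N := by
            have := Finset.card_erase_of_mem hyB
            have := Finset.card_pos.mpr ⟨y, hyB⟩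
            simp at hcard ⊢; omega
          have hrec := ih ∅ (B.erase y) hcard' (by simp) (by simp)
            (fun z hz => hBa z (Finset.mem_of_mem_erase hz))
          have hfac : 0 ≤ p y * (2 * ∑ j ∈ B, p j - t) := by
            apply mul_nonneg (le_trans ha0 (hBa y hyB))
            have := hBa y hyB; linarith
          rw [hsplitB] at hfac
          simp only [Finset.sum_empty] at hrec ⊢
          rw [hsplitB, hsplitB2]
          nlinarith [hrec, hfac]
        · have hcard' : (A.erase x).card + (B.erase y).card ≤ N := by
            have := Finset.card_erase_of_mem hyB
            have := Finset.card_pos.mpr ⟨y, hyB⟩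
            have := Finset.card_erase_of_mem hxA
            have := Finset.card_pos.mpr ⟨x, hxA⟩
            omega
          have hrec := ih (A.erase x) (B.erase y) hcard'
            (fun z hz => hA0 z (Finset.mem_of_mem_erase hz))
            (fun z hz => hAa z (Finset.mem_of_mem_erase hz))
            (fun z hz => hBa z (Finset.mem_of_mem_erase hz))
          have hsplitA : ∑ i ∈ A, p i = p x + ∑ i ∈ A.erase x, p i := by
            rw [Finset.add_sum_erase _ _ hxA]
          have hsplitA2 : ∑ i ∈ A, (p i) ^ 2 = (p x) ^ 2 + ∑ i ∈ A.erase x, (p i) ^ 2 :=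
            (Finset.add_sum_erase A (fun i => (p i) ^ 2) hxA).symm
          have hfac : 0 ≤ (p y - p x) * (p x - (∑ i ∈ A, p i - ∑ j ∈ B, p j) - t / 2) := by
            apply mul_nonneg
            · have := hAa x hxA; have := hBa y hyB; linarith
            · have := hx x hxA; linarith
          rw [hsplitA, hsplitA2, hsplitB, hsplitB2]
          rw [hsplitA, hsplitB] at hfac
          nlinarith [hrec, hfac]

lemma expLoss_diff_aux {n : ℕ} (p : Fin n → ℝ) (D : ℝ) (S T : Finset (Fin n)) :
    expLoss p D S - expLoss p D T =
      (∑ i ∈ S \ T, p i - ∑ j ∈ T \ S, p j) ^ 2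
      + (2 * (∑ i ∈ T, p i - (D - 1/2))) * (∑ i ∈ S \ T, p i - ∑ j ∈ T \ S, p j)
      + (∑ j ∈ T \ S, (p j) ^ 2 - ∑ i ∈ S \ T, (p i) ^ 2) := by
  classical
  have hq : ∀ (U : Finset (Fin n)), ∑ i ∈ U, p i * (1 - p i) = ∑ i ∈ U, p i - ∑ i ∈ U, (p i) ^ 2 := by
    intro U
    rw [← Finset.sum_sub_distrib]
    exact Finset.sum_congr rfl (fun i _ => by ring)
  have hS : ∑ i ∈ S ∩ T, p i + ∑ i ∈ S \ T, p i = ∑ i ∈ S, p i :=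
    Finset.sum_inter_add_sum_sdiff S T p
  have hT : ∑ i ∈ S ∩ T, p i + ∑ i ∈ T \ S, p i = ∑ i ∈ T, p i := by
    rw [Finset.inter_comm]; exact Finset.sum_inter_add_sum_sdiff T S p
  have hS2 : ∑ i ∈ S ∩ T, (p i) ^ 2 + ∑ i ∈ S \ T, (p i) ^ 2 = ∑ i ∈ S, (p i) ^ 2 :=
    Finset.sum_inter_add_sum_sdiff S T _
  have hT2 : ∑ i ∈ S ∩ T, (p i) ^ 2 + ∑ i ∈ T \ S, (p i) ^ 2 = ∑ i ∈ T, (p i) ^ 2 := by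
    rw [Finset.inter_comm]; exact Finset.sum_inter_add_sum_sdiff T S _
  unfold expLoss
  rw [hq S, hq T, ← hS, ← hT, ← hS2, ← hT2]
  ring

theorem stmt_6 {n : ℕ} (hn : 1 ≤ n) (p : Fin n → ℝ)
    (hp : ∀ i, 0 ≤ p i ∧ p i ≤ 1) (D : ℝ) (hD : 0 < D)
    (σ : Equiv.Perm (Fin n)) (hσ : ∀ i j : Fin n, i ≤ j → p (σ j) ≤ p (σ i))
    -- (A1): p_{σ(1)} > ⋯ > p_{σ(n)} > 0
    (hA1 : ∀ i j : Fin n, i < j → p (σ j) < p (σ i)) (hpos : ∀ i, 0 < p i)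
    -- (A2)
    (k : ℕ) (hk1 : 1 ≤ k) (hk2 : k ≤ n)
    (hkgt : ∑ i ∈ prefixSet σ k, p i > D - 1/2)
    (hklt : ∑ i ∈ prefixSet σ (k - 1), p i < D - 1/2)
    (δ₁ δ₂ Δk ε₀ : ℝ)
    (hδ₁ : δ₁ = ∑ i ∈ prefixSet σ k, p i - (D - 1/2))
    (hδ₂ : δ₂ = (D - 1/2) - ∑ i ∈ prefixSet σ (k - 1), p i)
    (hΔk : Δk = if h : k < n then p (σ ⟨k - 1, by omega⟩) - p (σ ⟨k, h⟩) else 2)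
    (hε₀ : ε₀ = min (δ₁ / k) (min (δ₂ / k) (Δk / 2))) :
    0 < ε₀ ∧
    ∀ pt : Fin n → ℝ, (∀ i, 0 ≤ pt i ∧ pt i ≤ 1) → (∀ i, |pt i - p i| < ε₀) →
      -- (i): p̃_{σ(i)} > p̃_{σ(j)} whenever 1 ≤ i ≤ k < j ≤ n
      ((∀ i j : Fin n, (i : ℕ) < k → k ≤ (j : ℕ) → pt (σ j) < pt (σ i)) ∧
      -- (ii)
      (∑ i ∈ prefixSet σ k, pt i > D - 1/2 ∧
        ∑ i ∈ prefixSet σ (k - 1), pt i < D - 1/2) ∧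
      -- {σ(1),…,σ(k)} is the output of the offline algorithm applied to (p̃, D)
      (∀ τ : Equiv.Perm (Fin n), (∀ i j : Fin n, i ≤ j → pt (τ j) ≤ pt (τ i)) →
        ∀ m ≤ n,
          ((∑ i ∈ prefixSet τ m, pt i > D - 1/2 ∧
              ∀ m' < m, ∑ i ∈ prefixSet τ m', pt i ≤ D - 1/2) ∨
            (m = n ∧ ∑ i ∈ prefixSet τ n, pt i ≤ D - 1/2)) →
          prefixSet τ m = prefixSet σ k) ∧
      -- and it is optimal for the true profile p
      (∀ S : Finset (Fin n), expLoss p D (prefixSet σ k) ≤ expLoss p D S)) := by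
  classical
  have hkn : k - 1 < n := by omega
  set a : ℝ := p (σ ⟨k - 1, hkn⟩) with ha_def
  -- everyone inside the prefix has p-value ≥ a
  have ha_le : ∀ y ∈ prefixSet σ k, a ≤ p y := by
    intro y hy
    rw [mem_prefixSet_aux] at hy
    have h := hσ (σ.symm y) ⟨k - 1, hkn⟩ (by rw [Fin.le_def]; simp; omega)
    rwa [σ.apply_symm_apply] at h
  -- everyone outside the prefix has p-value ≤ a
  have hb_le : ∀ x, x ∉ prefixSet σ k → p x ≤ a := by
    intro x hx
    rw [mem_prefixSet_aux, not_lt] at hx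
    have h := hσ ⟨k - 1, hkn⟩ (σ.symm x) (by rw [Fin.le_def]; simp; omega)
    rwa [σ.apply_symm_apply] at h
  have hsumk : ∑ i ∈ prefixSet σ k, p i = a + ∑ i ∈ prefixSet σ (k - 1), p i :=
    sum_prefixSet_succ_aux σ hk1 hk2 p
  have hδ₁pos : 0 < δ₁ := by rw [hδ₁]; linarith
  have hδ₂pos : 0 < δ₂ := by rw [hδ₂]; linarith
  have hΔkpos : 0 < Δk := by
    rw [hΔk]
    split_ifs with h
    · exact sub_pos.mpr (hA1 ⟨k - 1, hkn⟩ ⟨k, h⟩ (by rw [Fin.lt_def]; simp; omega))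
    · norm_num
  have hkR : (0:ℝ) < (k:ℝ) := by exact_mod_cast hk1
  have hε₀pos : 0 < ε₀ := by
    rw [hε₀]
    exact lt_min (div_pos hδ₁pos hkR) (lt_min (div_pos hδ₂pos hkR) (by linarith))
  have hε₀δ₁ : (k:ℝ) * ε₀ ≤ δ₁ := by
    have : ε₀ ≤ δ₁ / k := hε₀ ▸ min_le_left _ _
    rw [le_div_iff₀ hkR] at this; linarith
  have hε₀δ₂ : (k:ℝ) * ε₀ ≤ δ₂ := by
    have : ε₀ ≤ δ₂ / k := hε₀ ▸ le_trans (min_le_right _ _) (min_le_left _ _)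
    rw [le_div_iff₀ hkR] at this; linarith
  have hcardk : (prefixSet σ k).card = k := card_prefixSet_aux σ hk2
  have hcardk1 : (prefixSet σ (k - 1)).card = k - 1 := card_prefixSet_aux σ (by omega)
  have hcastk1 : ((k - 1 : ℕ):ℝ) = (k:ℝ) - 1 := by
    rw [Nat.cast_sub hk1]; simp
  -- optimality of the prefix set (doesn't depend on pt)
  have hopt : ∀ S : Finset (Fin n), expLoss p D (prefixSet σ k) ≤ expLoss p D S := by
    intro S
    set T := prefixSet σ k with hT
    have ht0 : 0 ≤ 2 * (∑ i ∈ T, p i - (D - 1/2)) := by linarith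
    have ht2 : 2 * (∑ i ∈ T, p i - (D - 1/2)) ≤ 2 * a := by linarith
    have key := core_ineq p a (2 * (∑ i ∈ T, p i - (D - 1/2))) ht0 ht2
      ((S \ T).card + (T \ S).card) (S \ T) (T \ S) le_rfl
      (fun x _ => (hp x).1)
      (fun x hx => hb_le x (Finset.mem_sdiff.mp hx).2)
      (fun y hy => ha_le y (Finset.mem_sdiff.mp hy).1)
    have hdiff := expLoss_diff_aux p D S T
    linarith
  refine ⟨hε₀pos, ?_⟩
  intro pt hpt hclose
  -- part (i)
  have part1 : ∀ i j : Fin n, (i : ℕ) < k → k ≤ (j : ℕ) → pt (σ j) < pt (σ i) := by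
    intro i j hi hj
    have hkn' : k < n := lt_of_le_of_lt hj j.isLt
    have h1 : p (σ j) ≤ p (σ ⟨k, hkn'⟩) := hσ ⟨k, hkn'⟩ j (by rw [Fin.le_def]; simpa using hj)
    have h2 : a ≤ p (σ i) := hσ i ⟨k - 1, hkn⟩ (by rw [Fin.le_def]; simp; omega)
    have hΔ : Δk = a - p (σ ⟨k, hkn'⟩) := by rw [hΔk, dif_pos hkn']
    have hε : ε₀ ≤ Δk / 2 := hε₀ ▸ le_trans (min_le_right _ _) (min_le_right _ _)
    have hc1 := abs_lt.mp (hclose (σ i))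
    have hc2 := abs_lt.mp (hclose (σ j))
    linarith
  -- part (ii)
  have hii1 : ∑ i ∈ prefixSet σ k, pt i > D - 1/2 := by
    have hne : (prefixSet σ k).Nonempty := Finset.card_pos.mp (by rw [hcardk]; omega)
    have hlt : ∑ i ∈ prefixSet σ k, (p i - ε₀) < ∑ i ∈ prefixSet σ k, pt i :=
      Finset.sum_lt_sum_of_nonempty hne (fun i _ => by have := abs_lt.mp (hclose i); linarith)
    rw [Finset.sum_sub_distrib, Finset.sum_const, hcardk, nsmul_eq_mul] at hlt
    linarith
  have hii2 : ∑ i ∈ prefixSet σ (k - 1), pt i < D - 1/2 := by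
    have hle : ∑ i ∈ prefixSet σ (k - 1), pt i ≤ ∑ i ∈ prefixSet σ (k - 1), (p i + ε₀) :=
      Finset.sum_le_sum (fun i _ => by have := abs_lt.mp (hclose i); linarith)
    rw [Finset.sum_add_distrib, Finset.sum_const, hcardk1, nsmul_eq_mul, hcastk1] at hle
    linarith
  refine ⟨part1, ⟨hii1, hii2⟩, ?_, hopt⟩
  -- part (iii)
  intro τ hτ m hm halg
  have hcardτk : (prefixSet τ k).card = k := card_prefixSet_aux τ hk2
  have hC1 : prefixSet τ k = prefixSet σ k := by
    have hsub : prefixSet τ k ⊆ prefixSet σ k := by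
      intro x hx
      by_contra hxn
      have hns : ¬ (prefixSet σ k ⊆ prefixSet τ k) := by
        intro hsub'
        have heq : prefixSet σ k = prefixSet τ k :=
          Finset.eq_of_subset_of_card_le hsub' (by rw [hcardk, hcardτk])
        exact hxn (heq ▸ hx)
      obtain ⟨y, hy, hyn⟩ := Finset.not_subset.mp hns
      have hxk : (τ.symm x : ℕ) < k := (mem_prefixSet_aux τ k x).mp hx
      have hyk : (σ.symm y : ℕ) < k := (mem_prefixSet_aux σ k y).mp hy
      have hxk' : k ≤ (σ.symm x : ℕ) := not_lt.mp (fun h => hxn ((mem_prefixSet_aux σ k x).mpr h))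
      have hyk' : k ≤ (τ.symm y : ℕ) := not_lt.mp (fun h => hyn ((mem_prefixSet_aux τ k y).mpr h))
      have h1 : pt x < pt y := by
        have := part1 (σ.symm y) (σ.symm x) hyk hxk'
        simpa using this
      have h2 : pt y ≤ pt x := by
        have := hτ (τ.symm x) (τ.symm y) (by rw [Fin.le_def]; omega)
        simpa using this
      linarith
    exact Finset.eq_of_subset_of_card_le hsub (by rw [hcardk, hcardτk])
  rcases halg with ⟨hgt', hmin⟩ | ⟨hmn, hle'⟩
  · have hmk : ¬ k < m := by
      intro h
      have := hmin k h
      rw [hC1] at this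
      linarith
    have hkm : ¬ m < k := by
      intro h
      have hsub : prefixSet τ m ⊆ prefixSet τ (k - 1) := prefixSet_mono_aux τ (by omega)
      have h1 : ∑ i ∈ prefixSet τ m, pt i ≤ ∑ i ∈ prefixSet τ (k - 1), pt i :=
        Finset.sum_le_sum_of_subset_of_nonneg hsub (fun i _ _ => (hpt i).1)
      have h2 : ∑ i ∈ prefixSet τ (k - 1), pt i ≤ ∑ i ∈ prefixSet τ (k - 1), (p i + ε₀) :=
        Finset.sum_le_sum (fun i _ => by have := abs_lt.mp (hclose i); linarith)
      have hcardτk1 : (prefixSet τ (k - 1)).card = k - 1 := card_prefixSet_aux τ (by omega)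
      rw [Finset.sum_add_distrib, Finset.sum_const, hcardτk1, nsmul_eq_mul, hcastk1] at h2
      have h3 : ∑ i ∈ prefixSet τ k, p i = p (τ ⟨k - 1, hkn⟩) + ∑ i ∈ prefixSet τ (k - 1), p i :=
        sum_prefixSet_succ_aux τ hk1 hk2 p
      have h5 : a ≤ p (τ ⟨k - 1, hkn⟩) := by
        apply ha_le
        rw [← hC1, mem_prefixSet_aux, Equiv.symm_apply_apply]
        simp; omega
      have h6 : ∑ i ∈ prefixSet τ k, p i = ∑ i ∈ prefixSet σ k, p i := by rw [hC1]
      linarith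
    have hmkeq : m = k := by omega
    rw [hmkeq]
    exact hC1
  · exfalso
    have hsub : prefixSet σ k ⊆ prefixSet τ n := by
      rw [prefixSet_univ_aux]; exact Finset.subset_univ _
    have := Finset.sum_le_sum_of_subset_of_nonneg hsub (fun i _ _ => (hpt i).1)
    linarith
end
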